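/- There exists a function n₀ : (0,1) → ℕ such that for every ε ∈ (0,1), every n ≥ n₀(ε), every d ≤ 20⁴/ε⁸ and every k ∈ [εn/(2d), 2n/(εd)], if B is drawn from LRR(n, d), then E[|N(G_k)|] ≥ (1 − 1/e + (ε/20)²⁴) · E[|N(O_k)|]. -/

import Mathlib

open Finset

/-- One step of the greedy algorithm on the bipartite graph whose left nodes are
`Fin n`, right nodes are `Fin m`, and whose neighborhoods are given by `N`.
It adds to the current solution `S` the left node with largest marginal
coverage `|N(u) \ N(S)|`, breaking ties by smallest index. -/
noncomputable def greedyStep {n m : ℕ} (N : Fin n → Finset (Fin m))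
    (S : Finset (Fin n)) : Finset (Fin n) :=
  if h : (Finset.univ \ S).Nonempty then
    insert
      (((Finset.univ \ S).filter fun u =>
          ((N u) \ S.biUnion N).card =
            (Finset.univ \ S).sup fun v => ((N v) \ S.biUnion N).card).min'
        (by
          obtain ⟨u, hu, hsup⟩ :=
            Finset.exists_mem_eq_sup (Finset.univ \ S) h
              (fun v => ((N v) \ S.biUnion N).card)
          exact ⟨u, Finset.mem_filter.mpr ⟨hu, hsup.symm⟩⟩))
      S
  else S

/-- The greedy solution after `k` iterations (`greedy N 0 = ∅`). -/
noncomputable def greedy {n m : ℕ} (N : Fin n → Finset (Fin m)) : ℕ → Finset (Fin n)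
  | 0 => ∅
  | k + 1 => greedyStep N (greedy N k)

/-- The coverage `|N(O_k)|` of an optimal solution with cardinality constraint `k`. -/
def optValue {n m : ℕ} (N : Fin n → Finset (Fin m)) (k : ℕ) : ℕ :=
  (Finset.univ.powerset.filter fun S : Finset (Fin n) => S.card ≤ k).sup
    fun S => (S.biUnion N).card

/-- The sample space of the left-regular random model `LRR(n, d)`: all
neighborhood maps in which every left node has exactly `d` of the `n` right
nodes as neighbors. -/
def lrrGraphs (n d : ℕ) : Finset (Fin n → Finset (Fin n)) :=
  Finset.univ.filter fun N => ∀ i, (N i).card = d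

/-- Expectation of `f` under the left-regular random model `LRR(n, d)`
(uniform distribution on `lrrGraphs n d`). -/
noncomputable def lrrExp (n d : ℕ) (f : (Fin n → Finset (Fin n)) → ℝ) : ℝ :=
  (∑ N ∈ lrrGraphs n d, f N) / (lrrGraphs n d).card

open scoped Classical in
/-- Probability of the event `p` under the left-regular random model `LRR(n, d)`. -/
noncomputable def lrrProb (n d : ℕ) (p : (Fin n → Finset (Fin n)) → Prop) : ℝ :=
  ((lrrGraphs n d).filter p).card / (lrrGraphs n d).card

section GreedyBasics

variable {L R : ℕ} (N : Fin L → Finset (Fin R))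

lemma greedyStep_spec {S : Finset (Fin L)} (h : (Finset.univ \ S).Nonempty) :
    ∃ u ∈ Finset.univ \ S,
      ((N u) \ S.biUnion N).card
          = ((Finset.univ \ S).sup fun v => ((N v) \ S.biUnion N).card) ∧
        greedyStep N S = insert u S := by
  rw [greedyStep, dif_pos h]
  have hne : (((Finset.univ \ S).filter fun u =>
      ((N u) \ S.biUnion N).card =
        (Finset.univ \ S).sup fun v => ((N v) \ S.biUnion N).card)).Nonempty := by
    obtain ⟨u, hu, hsup⟩ :=
      Finset.exists_mem_eq_sup (Finset.univ \ S) h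
        (fun v => ((N v) \ S.biUnion N).card)
    exact ⟨u, Finset.mem_filter.mpr ⟨hu, hsup.symm⟩⟩
  have hmem := Finset.min'_mem _ hne
  obtain ⟨h1, h2⟩ := Finset.mem_filter.mp hmem
  exact ⟨_, h1, h2, rfl⟩

lemma subset_greedyStep (S : Finset (Fin L)) : S ⊆ greedyStep N S := by
  rw [greedyStep]
  split_ifs
  · exact Finset.subset_insert _ _
  · exact Finset.Subset.refl _

lemma cov_greedyStep {S : Finset (Fin L)} (h : (Finset.univ \ S).Nonempty) :
    ((greedyStep N S).biUnion N).card
      = (S.biUnion N).card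
        + ((Finset.univ \ S).sup fun v => ((N v) \ S.biUnion N).card) := by
  obtain ⟨u, _, hval, hstep⟩ := greedyStep_spec N h
  rw [hstep, Finset.biUnion_insert, ← hval, add_comm]
  rw [← Finset.card_sdiff_add_card]

lemma greedy_subset_succ (t : ℕ) : greedy N t ⊆ greedy N (t + 1) :=
  subset_greedyStep N _

lemma greedy_subset {t t' : ℕ} (h : t ≤ t') : greedy N t ⊆ greedy N t' := by
  induction t' with
  | zero =>
      have : t = 0 := Nat.le_zero.mp h
      subst this; exact Finset.Subset.refl _
  | succ t' ih =>
      by_cases ht : t ≤ t'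
      · exact (ih ht).trans (greedy_subset_succ N t')
      · have : t = t' + 1 := by omega
        subst this; exact Finset.Subset.refl _

lemma cov_mono {t t' : ℕ} (h : t ≤ t') :
    ((greedy N t).biUnion N).card ≤ ((greedy N t').biUnion N).card :=
  Finset.card_le_card (Finset.biUnion_subset_biUnion_of_subset_left _ (greedy_subset N h))

lemma card_greedy_le (t : ℕ) : (greedy N t).card ≤ t := by
  induction t with
  | zero => simp [greedy]
  | succ t ih =>
      have : greedy N (t+1) = greedyStep N (greedy N t) := rfl
      rw [this, greedyStep]
      split_ifs
      · exact le_trans (Finset.card_insert_le _ _) (by omega)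
      · omega

end GreedyBasics

section OptBasics

variable {L R : ℕ} (N : Fin L → Finset (Fin R))

lemma exists_optimal (k : ℕ) :
    ∃ O : Finset (Fin L), O.card ≤ k ∧ (O.biUnion N).card = optValue N k := by
  have hne : (Finset.univ.powerset.filter
      fun S : Finset (Fin L) => S.card ≤ k).Nonempty :=
    ⟨∅, Finset.mem_filter.mpr ⟨Finset.mem_powerset.mpr (Finset.empty_subset _), by simp⟩⟩
  obtain ⟨O, hO, hval⟩ := Finset.exists_mem_eq_sup _ hne
    (fun S : Finset (Fin L) => (S.biUnion N).card)
  exact ⟨O, (Finset.mem_filter.mp hO).2, hval.symm⟩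

lemma le_optValue {S : Finset (Fin L)} {k : ℕ} (hS : S.card ≤ k) :
    (S.biUnion N).card ≤ optValue N k := by
  unfold optValue
  exact Finset.le_sup (f := fun S : Finset (Fin L) => (S.biUnion N).card)
    (Finset.mem_filter.mpr ⟨Finset.mem_powerset.mpr (Finset.subset_univ _), hS⟩)

lemma optValue_le_mul {d k : ℕ} (hd : ∀ i, (N i).card = d) : optValue N k ≤ k * d := by
  apply Finset.sup_le
  intro S hS
  have h1 : (S.biUnion N).card ≤ ∑ u ∈ S, (N u).card := Finset.card_biUnion_le
  have h2 : ∑ u ∈ S, (N u).card = S.card * d := by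
    rw [Finset.sum_congr rfl fun u _ => hd u, Finset.sum_const, smul_eq_mul]
  have h3 := (Finset.mem_filter.mp hS).2
  calc (S.biUnion N).card ≤ S.card * d := by omega
    _ ≤ k * d := Nat.mul_le_mul_right d h3

lemma optValue_le_R (k : ℕ) : optValue N k ≤ R := by
  apply Finset.sup_le
  intro S _
  simpa using Finset.card_le_card (Finset.subset_univ (S.biUnion N))

lemma optValue_le_univcov (k : ℕ) :
    optValue N k ≤ ((Finset.univ : Finset (Fin L)).biUnion N).card := by
  apply Finset.sup_le
  intro S _
  exact Finset.card_le_card (Finset.biUnion_subset_biUnion_of_subset_left _ (Finset.subset_univ S))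

lemma optValue_key {k : ℕ} {S : Finset (Fin L)} (h : (Finset.univ \ S).Nonempty) :
    optValue N k ≤ (S.biUnion N).card
      + k * ((Finset.univ \ S).sup fun v => ((N v) \ S.biUnion N).card) := by
  obtain ⟨O, hOk, hOv⟩ := exists_optimal N k
  set B := S.biUnion N with hB
  set M : ℕ := (Finset.univ \ S).sup fun v => ((N v) \ B).card with hM
  have h2 : (O.biUnion N) \ B ⊆ O.biUnion (fun u => N u \ B) := by
    intro j hj
    rw [Finset.mem_sdiff, Finset.mem_biUnion] at hj
    obtain ⟨⟨u, hu, hju⟩, hjB⟩ := hj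
    exact Finset.mem_biUnion.mpr ⟨u, hu, Finset.mem_sdiff.mpr ⟨hju, hjB⟩⟩
  have h3 : ((O.biUnion N) \ B).card ≤ ∑ u ∈ O, (N u \ B).card :=
    le_trans (Finset.card_le_card h2) Finset.card_biUnion_le
  have h4 : ∀ u ∈ O, (N u \ B).card ≤ M := by
    intro u _
    by_cases huS : u ∈ S
    · have : N u ⊆ B := Finset.subset_biUnion_of_mem N huS
      have : N u \ B = ∅ := Finset.sdiff_eq_empty_iff_subset.mpr this
      simp [this]
    · exact Finset.le_sup (f := fun v => ((N v) \ B).card)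
        (Finset.mem_sdiff.mpr ⟨Finset.mem_univ u, huS⟩)
  have h5 : ∑ u ∈ O, (N u \ B).card ≤ O.card * M := by
    calc ∑ u ∈ O, (N u \ B).card ≤ ∑ _u ∈ O, M := Finset.sum_le_sum h4
      _ = O.card * M := by rw [Finset.sum_const, smul_eq_mul]
  have h6 : (O.biUnion N).card ≤ B.card + ((O.biUnion N) \ B).card := by
    have : O.biUnion N ⊆ B ∪ ((O.biUnion N) \ B) := by
      intro j hj
      by_cases hjB : j ∈ B
      · exact Finset.mem_union_left _ hjB
      · exact Finset.mem_union_right _ (Finset.mem_sdiff.mpr ⟨hj, hjB⟩)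
    calc (O.biUnion N).card ≤ (B ∪ ((O.biUnion N) \ B)).card := Finset.card_le_card this
      _ ≤ B.card + ((O.biUnion N) \ B).card := Finset.card_union_le _ _
  have h7 : O.card * M ≤ k * M := Nat.mul_le_mul_right M hOk
  omega

lemma greedy_univ_opt {k t : ℕ} (h : ¬ (Finset.univ \ greedy N t).Nonempty) :
    optValue N k ≤ ((greedy N t).biUnion N).card := by
  have huniv : (Finset.univ : Finset (Fin L)) ⊆ greedy N t := by
    intro u _
    by_contra hu
    exact h ⟨u, Finset.mem_sdiff.mpr ⟨Finset.mem_univ u, hu⟩⟩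
  exact le_trans (optValue_le_univcov N k)
    (Finset.card_le_card (Finset.biUnion_subset_biUnion_of_subset_left _ huniv))

lemma greedy_recursion {k : ℕ} (hk : 1 ≤ k) (t : ℕ) :
    (optValue N k : ℝ) - (((greedy N (t+1)).biUnion N).card : ℝ)
      ≤ (1 - 1/(k:ℝ)) * ((optValue N k : ℝ) - (((greedy N t).biUnion N).card : ℝ)) := by
  have hk0 : (0:ℝ) < k := by exact_mod_cast hk
  by_cases h : (Finset.univ \ greedy N t).Nonempty
  · have hstep : greedy N (t+1) = greedyStep N (greedy N t) := rfl
    have hcov := cov_greedyStep N h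
    have hkey := optValue_key N (k := k) h
    set M := ((Finset.univ \ greedy N t).sup
      fun v => ((N v) \ (greedy N t).biUnion N).card) with hM
    have hcovR : (((greedy N (t+1)).biUnion N).card : ℝ)
        = (((greedy N t).biUnion N).card : ℝ) + (M : ℝ) := by
      rw [hstep]; exact_mod_cast hcov
    have hkeyR : (optValue N k : ℝ) ≤ (((greedy N t).biUnion N).card : ℝ) + (k:ℝ) * M := by
      exact_mod_cast hkey
    rw [hcovR]
    have hexp : (1 - 1/(k:ℝ)) * ((optValue N k : ℝ) - (((greedy N t).biUnion N).card : ℝ))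
        = ((optValue N k : ℝ) - (((greedy N t).biUnion N).card : ℝ))
          - ((optValue N k : ℝ) - (((greedy N t).biUnion N).card : ℝ)) / k := by
      field_simp
    rw [hexp]
    have : ((optValue N k : ℝ) - (((greedy N t).biUnion N).card : ℝ)) / k ≤ M := by
      rw [div_le_iff₀ hk0]
      nlinarith [hkeyR]
    linarith
  · have hstep : greedy N (t+1) = greedyStep N (greedy N t) := rfl
    have hsame : greedy N (t+1) = greedy N t := by
      rw [hstep, greedyStep, dif_neg h]
    rw [hsame]
    have hle : (optValue N k : ℝ) ≤ (((greedy N t).biUnion N).card : ℝ) := by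
      exact_mod_cast greedy_univ_opt N h
    have h1k : 0 ≤ 1/(k:ℝ) := by positivity
    nlinarith [mul_nonpos_of_nonneg_of_nonpos h1k
      (by linarith : (optValue N k : ℝ) - (((greedy N t).biUnion N).card : ℝ) ≤ 0)]

lemma greedy_recursion_iter {k : ℕ} (hk : 1 ≤ k) (m j : ℕ) :
    (optValue N k : ℝ) - (((greedy N (m + j)).biUnion N).card : ℝ)
      ≤ (1 - 1/(k:ℝ))^j
        * ((optValue N k : ℝ) - (((greedy N m).biUnion N).card : ℝ)) := by
  have hk0 : (0:ℝ) < k := by exact_mod_cast hk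
  have hq0 : (0:ℝ) ≤ 1 - 1/(k:ℝ) := by
    have : 1/(k:ℝ) ≤ 1 := by
      rw [div_le_one hk0]; exact_mod_cast hk
    linarith
  induction j with
  | zero => simp
  | succ j ih =>
      have h1 := greedy_recursion N hk (m + j)
      have h2 : (1 - 1/(k:ℝ)) * ((optValue N k : ℝ) - (((greedy N (m+j)).biUnion N).card : ℝ))
          ≤ (1 - 1/(k:ℝ)) * ((1 - 1/(k:ℝ))^j
            * ((optValue N k : ℝ) - (((greedy N m).biUnion N).card : ℝ))) :=
        mul_le_mul_of_nonneg_left ih hq0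
      have h3 : m + (j+1) = (m + j) + 1 := by omega
      rw [h3]
      calc (optValue N k : ℝ) - (((greedy N ((m+j)+1)).biUnion N).card : ℝ)
          ≤ (1 - 1/(k:ℝ)) * ((optValue N k : ℝ) - (((greedy N (m+j)).biUnion N).card : ℝ)) := h1
        _ ≤ (1 - 1/(k:ℝ)) * ((1 - 1/(k:ℝ))^j
            * ((optValue N k : ℝ) - (((greedy N m).biUnion N).card : ℝ))) := h2
        _ = (1 - 1/(k:ℝ))^(j+1)
            * ((optValue N k : ℝ) - (((greedy N m).biUnion N).card : ℝ)) := by ring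

lemma greedy_min (k t : ℕ) : min t (optValue N k) ≤ ((greedy N t).biUnion N).card := by
  induction t with
  | zero => simp
  | succ t ih =>
      by_cases h : optValue N k ≤ ((greedy N t).biUnion N).card
      · calc min (t+1) (optValue N k) ≤ optValue N k := min_le_right _ _
          _ ≤ ((greedy N t).biUnion N).card := h
          _ ≤ ((greedy N (t+1)).biUnion N).card := cov_mono N (Nat.le_succ t)
      · push_neg at h
        obtain ⟨O, hOk, hOv⟩ := exists_optimal N k
        have hlt : ((greedy N t).biUnion N).card < (O.biUnion N).card := by omega
        have hne : ((O.biUnion N) \ ((greedy N t).biUnion N)).Nonempty := by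
          by_contra hemp
          rw [Finset.not_nonempty_iff_eq_empty, Finset.sdiff_eq_empty_iff_subset] at hemp
          exact absurd (Finset.card_le_card hemp) (by omega)
        obtain ⟨j, hj⟩ := hne
        rw [Finset.mem_sdiff, Finset.mem_biUnion] at hj
        obtain ⟨⟨u, _, hju⟩, hjB⟩ := hj
        have huS : u ∉ greedy N t := fun huS =>
          hjB (Finset.mem_biUnion.mpr ⟨u, huS, hju⟩)
        have hmem : u ∈ Finset.univ \ greedy N t :=
          Finset.mem_sdiff.mpr ⟨Finset.mem_univ u, huS⟩
        have hnonempty : (Finset.univ \ greedy N t).Nonempty := ⟨u, hmem⟩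
        have hcov := cov_greedyStep N hnonempty
        have hsup : 1 ≤ ((Finset.univ \ greedy N t).sup
            fun v => ((N v) \ ((greedy N t).biUnion N)).card) := by
          have h1 : 1 ≤ ((N u) \ ((greedy N t).biUnion N)).card :=
            Finset.card_pos.mpr ⟨j, Finset.mem_sdiff.mpr ⟨hju, hjB⟩⟩
          exact le_trans h1
            (Finset.le_sup (f := fun v => ((N v) \ ((greedy N t).biUnion N)).card) hmem)
        have hstep : greedy N (t+1) = greedyStep N (greedy N t) := rfl
        rw [hstep, hcov]
        have := ih
        omega

end OptBasics
section Freshness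

variable {n : ℕ}

lemma cov_le_card_mul {R : ℕ} (N : Fin n → Finset (Fin R)) {d : ℕ}
    (hNd : ∀ i, (N i).card = d) (S : Finset (Fin n)) :
    (S.biUnion N).card ≤ S.card * d := by
  calc (S.biUnion N).card ≤ ∑ u ∈ S, (N u).card := Finset.card_biUnion_le
    _ = S.card * d := by
        rw [Finset.sum_congr rfl fun u _ => hNd u, Finset.sum_const, smul_eq_mul]

/-- The high-probability event: for every right-set `T` of size `J`, at least
`mf` left nodes have neighborhood disjoint from `T`. -/
def FreshEvent (J mf : ℕ) (N : Fin n → Finset (Fin n)) : Prop :=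
  ∀ T : Finset (Fin n), T.card = J →
    mf ≤ (Finset.univ.filter fun u => Disjoint (N u) T).card

lemma fresh_cov {d J mf : ℕ} {N : Fin n → Finset (Fin n)}
    (hNd : ∀ i, (N i).card = d) (hE : FreshEvent J mf N) (hJ : J ≤ n)
    (hmJ : (mf - 1) * d ≤ J) :
    ∀ t, t ≤ mf → t * d ≤ ((greedy N t).biUnion N).card := by
  intro t
  induction t with
  | zero => simp
  | succ t ih =>
      intro ht
      have iht : t * d ≤ ((greedy N t).biUnion N).card := ih (by omega)
      have hSc : (greedy N t).card ≤ t := card_greedy_le N t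
      have hcovJ : ((greedy N t).biUnion N).card ≤ J := by
        have h1 := cov_le_card_mul N hNd (greedy N t)
        have h2 : (greedy N t).card * d ≤ (mf - 1) * d :=
          Nat.mul_le_mul_right d (by omega)
        omega
      obtain ⟨T, hsub, hT⟩ := Finset.exists_superset_card_eq hcovJ
        (by simpa using hJ)
      have hfresh := hE T hT
      have hex : ∃ u, u ∈ Finset.univ.filter (fun u => Disjoint (N u) T)
          ∧ u ∉ greedy N t := by
        by_contra hcon
        push_neg at hcon
        have hsubS : Finset.univ.filter (fun u => Disjoint (N u) T) ⊆ greedy N t :=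
          fun u hu => hcon u hu
        have := Finset.card_le_card hsubS
        omega
      obtain ⟨u, hu, huS⟩ := hex
      have hdisjT : Disjoint (N u) T := (Finset.mem_filter.mp hu).2
      have hdisjB : Disjoint (N u) ((greedy N t).biUnion N) :=
        hdisjT.mono_right hsub
      have hself : (N u) \ ((greedy N t).biUnion N) = N u :=
        Finset.sdiff_eq_self_iff_disjoint.mpr hdisjB
      have hmemu : u ∈ Finset.univ \ greedy N t :=
        Finset.mem_sdiff.mpr ⟨Finset.mem_univ u, huS⟩
      have hne : (Finset.univ \ greedy N t).Nonempty := ⟨u, hmemu⟩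
      have hsup : d ≤ ((Finset.univ \ greedy N t).sup
          fun v => ((N v) \ (greedy N t).biUnion N).card) := by
        have : ((N u) \ ((greedy N t).biUnion N)).card = d := by rw [hself]; exact hNd u
        rw [← this]
        exact Finset.le_sup
          (f := fun v => ((N v) \ (greedy N t).biUnion N).card) hmemu
      have hstep : greedy N (t+1) = greedyStep N (greedy N t) := rfl
      have hcov := cov_greedyStep N hne
      rw [hstep, hcov]
      have : (t+1) * d = t * d + d := by ring
      omega

end Freshness
section Counting

variable {n d : ℕ}

/-- All `d`-subsets of `Fin n`. -/
def dSets (n d : ℕ) : Finset (Finset (Fin n)) :=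
  Finset.univ.filter fun s => s.card = d

lemma card_dSets : (dSets n d).card = n.choose d := by
  have h : dSets n d = Finset.powersetCard d (Finset.univ : Finset (Fin n)) := by
    ext s
    simp [dSets, Finset.mem_powersetCard, Finset.subset_univ]
  rw [h, Finset.card_powersetCard, Finset.card_univ, Fintype.card_fin]

lemma lrr_eq_pi : lrrGraphs n d = Fintype.piFinset (fun _ : Fin n => dSets n d) := by
  ext N
  simp [lrrGraphs, dSets, Fintype.mem_piFinset]

lemma card_lrr : (lrrGraphs n d).card = (n.choose d)^n := by
  rw [lrr_eq_pi, Fintype.card_piFinset]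
  simp [card_dSets]

/-- `d`-subsets meeting a fixed right-set `T`. -/
def badSets (n d : ℕ) (T : Finset (Fin n)) : Finset (Finset (Fin n)) :=
  (dSets n d).filter fun s => ¬ Disjoint s T

lemma count_W (T W : Finset (Fin n)) :
    ((lrrGraphs n d).filter fun N => ∀ u ∈ W, ¬ Disjoint (N u) T).card
      ≤ (badSets n d T).card ^ W.card * (n.choose d)^(n - W.card) := by
  classical
  have hsub : ((lrrGraphs n d).filter fun N => ∀ u ∈ W, ¬ Disjoint (N u) T)
      ⊆ Fintype.piFinset (fun u : Fin n =>
          if u ∈ W then badSets n d T else dSets n d) := by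
    intro N hN
    rw [Finset.mem_filter] at hN
    obtain ⟨hΩ, hW⟩ := hN
    have hcard : ∀ i, (N i).card = d := (Finset.mem_filter.mp hΩ).2
    rw [Fintype.mem_piFinset]
    intro u
    by_cases hu : u ∈ W
    · rw [if_pos hu]
      exact Finset.mem_filter.mpr
        ⟨Finset.mem_filter.mpr ⟨Finset.mem_univ _, hcard u⟩, hW u hu⟩
    · rw [if_neg hu]
      exact Finset.mem_filter.mpr ⟨Finset.mem_univ _, hcard u⟩
  calc ((lrrGraphs n d).filter fun N => ∀ u ∈ W, ¬ Disjoint (N u) T).card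
      ≤ (Fintype.piFinset (fun u : Fin n =>
          if u ∈ W then badSets n d T else dSets n d)).card := Finset.card_le_card hsub
    _ = ∏ u : Fin n, (if u ∈ W then badSets n d T else dSets n d).card := by
        rw [Fintype.card_piFinset]
    _ = (badSets n d T).card ^ W.card * (n.choose d)^(n - W.card) := by
        rw [← Finset.prod_sdiff (Finset.subset_univ W)]
        have h1 : ∏ u ∈ W, (if u ∈ W then badSets n d T else dSets n d).card
            = (badSets n d T).card ^ W.card := by
          rw [Finset.prod_congr rfl (fun u hu => by rw [if_pos hu]), Finset.prod_const]
        have h2 : ∏ u ∈ Finset.univ \ W, (if u ∈ W then badSets n d T else dSets n d).card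
            = (n.choose d)^(n - W.card) := by
          rw [Finset.prod_congr rfl
            (fun u hu => by rw [if_neg (Finset.mem_sdiff.mp hu).2, card_dSets]),
            Finset.prod_const, Finset.card_sdiff_of_subset (Finset.subset_univ W),
            Finset.card_univ, Fintype.card_fin]
        rw [h1, h2, mul_comm]

lemma badSets_le (T : Finset (Fin n)) (hd : 1 ≤ d) :
    (badSets n d T).card ≤ T.card * (n-1).choose (d-1) := by
  classical
  have hsub : badSets n d T ⊆ T.biUnion
      (fun j => (dSets n d).filter fun s => j ∈ s) := by
    intro s hs
    rw [badSets, Finset.mem_filter] at hs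
    obtain ⟨hsd, hndisj⟩ := hs
    obtain ⟨a, has, haT⟩ := Finset.not_disjoint_iff.mp hndisj
    exact Finset.mem_biUnion.mpr ⟨a, haT, Finset.mem_filter.mpr ⟨hsd, has⟩⟩
  have hper : ∀ j : Fin n, ((dSets n d).filter fun s => j ∈ s).card
      ≤ (n-1).choose (d-1) := by
    intro j
    have hinj : ∀ s ∈ (dSets n d).filter (fun s => j ∈ s),
        s.erase j ∈ Finset.powersetCard (d-1) ({j}ᶜ : Finset (Fin n)) := by
      intro s hs
      rw [Finset.mem_filter, dSets, Finset.mem_filter] at hs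
      obtain ⟨⟨_, hcard⟩, hjs⟩ := hs
      rw [Finset.mem_powersetCard]
      constructor
      · intro x hx
        rw [Finset.mem_erase] at hx
        simpa using hx.1
      · rw [Finset.card_erase_of_mem hjs, hcard]
    have hii : Set.InjOn (fun s : Finset (Fin n) => s.erase j)
        ((dSets n d).filter (fun s => j ∈ s)) := by
      intro s hs s' hs' heq
      simp only [Finset.coe_filter, Set.mem_setOf_eq] at hs hs'
      have hjs : j ∈ s := hs.2
      have hjs' : j ∈ s' := hs'.2
      rw [← Finset.insert_erase hjs, ← Finset.insert_erase hjs']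
      simp only at heq
      rw [heq]
    calc ((dSets n d).filter fun s => j ∈ s).card
        ≤ (Finset.powersetCard (d-1) ({j}ᶜ : Finset (Fin n))).card :=
          Finset.card_le_card_of_injOn _ hinj hii
      _ = (n-1).choose (d-1) := by
          rw [Finset.card_powersetCard, Finset.card_compl,
            Finset.card_singleton, Fintype.card_fin]
  calc (badSets n d T).card ≤ (T.biUnion (fun j => (dSets n d).filter fun s => j ∈ s)).card :=
        Finset.card_le_card hsub
    _ ≤ ∑ j ∈ T, ((dSets n d).filter fun s => j ∈ s).card := Finset.card_biUnion_le
    _ ≤ ∑ _j ∈ T, (n-1).choose (d-1) := Finset.sum_le_sum (fun j _ => hper j)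
    _ = T.card * (n-1).choose (d-1) := by rw [Finset.sum_const, smul_eq_mul]

lemma choose_id (hd : 1 ≤ d) (hn : 1 ≤ n) :
    n * (n-1).choose (d-1) = n.choose d * d := by
  have := Nat.add_one_mul_choose_eq (n-1) (d-1)
  have hn' : (n-1)+1 = n := by omega
  have hd' : (d-1)+1 = d := by omega
  rw [hn', hd'] at this
  exact this

lemma badSets_half (T : Finset (Fin n)) (hd : 1 ≤ d) (hn : 1 ≤ n)
    (h2 : 2 * T.card * d ≤ n) :
    2 * (badSets n d T).card ≤ n.choose d := by
  have h1 := badSets_le T hd (n := n)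
  have key : 2 * (badSets n d T).card * d ≤ n.choose d * d := by
    calc 2 * (badSets n d T).card * d ≤ 2 * (T.card * (n-1).choose (d-1)) * d := by
          exact Nat.mul_le_mul_right d (Nat.mul_le_mul_left 2 h1)
      _ = (2 * T.card * d) * (n-1).choose (d-1) := by ring
      _ ≤ n * (n-1).choose (d-1) := Nat.mul_le_mul_right _ h2
      _ = n.choose d * d := choose_id hd hn
  exact Nat.le_of_mul_le_mul_right key (by omega)

open scoped Classical in
lemma count_bad (J mf : ℕ) (hd : 1 ≤ d) (hmf : 1 ≤ mf) (hmfn : mf ≤ n) :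
    ((lrrGraphs n d).filter fun N => ¬ FreshEvent J mf N).card
      ≤ n.choose J * (n.choose (n - mf + 1)
          * ((J * (n-1).choose (d-1)) ^ (n - mf + 1) * (n.choose d)^(mf - 1))) := by
  have hstep1 : ((lrrGraphs n d).filter fun N => ¬ FreshEvent J mf N)
      ⊆ (Finset.powersetCard J (Finset.univ : Finset (Fin n))).biUnion
          (fun T => (lrrGraphs n d).filter fun N =>
            (Finset.univ.filter fun u => Disjoint (N u) T).card < mf) := by
    intro N hN
    rw [Finset.mem_filter] at hN
    obtain ⟨hΩ, hNF⟩ := hN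
    rw [FreshEvent] at hNF
    push_neg at hNF
    obtain ⟨T, hT, hTlt⟩ := hNF
    exact Finset.mem_biUnion.mpr ⟨T,
      Finset.mem_powersetCard.mpr ⟨Finset.subset_univ T, hT⟩,
      Finset.mem_filter.mpr ⟨hΩ, hTlt⟩⟩
  have hinner : ∀ T : Finset (Fin n), T.card = J →
      ((lrrGraphs n d).filter fun N =>
        (Finset.univ.filter fun u => Disjoint (N u) T).card < mf).card
      ≤ n.choose (n - mf + 1)
          * ((J * (n-1).choose (d-1)) ^ (n - mf + 1) * (n.choose d)^(mf - 1)) := by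
    intro T hTJ
    have hsub2 : ((lrrGraphs n d).filter fun N =>
        (Finset.univ.filter fun u => Disjoint (N u) T).card < mf)
        ⊆ (Finset.powersetCard (n - mf + 1) (Finset.univ : Finset (Fin n))).biUnion
            (fun W => (lrrGraphs n d).filter fun N => ∀ u ∈ W, ¬ Disjoint (N u) T) := by
      intro N hN
      rw [Finset.mem_filter] at hN
      obtain ⟨hΩ, hlt⟩ := hN
      have hcount := Finset.card_filter_add_card_filter_not
        (s := (Finset.univ : Finset (Fin n))) (p := fun u => Disjoint (N u) T)
      rw [Finset.card_univ, Fintype.card_fin] at hcount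
      have hge : n - mf + 1 ≤ (Finset.univ.filter fun u => ¬ Disjoint (N u) T).card := by
        omega
      obtain ⟨W, hWsub, hWcard⟩ := Finset.exists_subset_card_eq hge
      refine Finset.mem_biUnion.mpr ⟨W,
        Finset.mem_powersetCard.mpr ⟨Finset.subset_univ W, hWcard⟩,
        Finset.mem_filter.mpr ⟨hΩ, fun u hu => ?_⟩⟩
      exact (Finset.mem_filter.mp (hWsub hu)).2
    have hperW : ∀ W ∈ Finset.powersetCard (n - mf + 1) (Finset.univ : Finset (Fin n)),
        ((lrrGraphs n d).filter fun N => ∀ u ∈ W, ¬ Disjoint (N u) T).card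
          ≤ (J * (n-1).choose (d-1)) ^ (n - mf + 1) * (n.choose d)^(mf - 1) := by
      intro W hW
      have h2 : n - (n - mf + 1) = mf - 1 := by omega
      have hWcard : W.card = n - mf + 1 := (Finset.mem_powersetCard.mp hW).2
      have h1 := count_W (n := n) (d := d) T W
      have h3 : (badSets n d T).card ≤ J * (n-1).choose (d-1) := by
        rw [← hTJ]; exact badSets_le T hd
      calc ((lrrGraphs n d).filter fun N => ∀ u ∈ W, ¬ Disjoint (N u) T).card
          ≤ (badSets n d T).card ^ W.card * (n.choose d)^(n - W.card) := h1
        _ ≤ (J * (n-1).choose (d-1)) ^ W.card * (n.choose d)^(n - W.card) :=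
            Nat.mul_le_mul_right _ (Nat.pow_le_pow_left h3 _)
        _ = (J * (n-1).choose (d-1)) ^ (n - mf + 1) * (n.choose d)^(mf - 1) := by
            rw [hWcard, h2]
    calc ((lrrGraphs n d).filter fun N =>
          (Finset.univ.filter fun u => Disjoint (N u) T).card < mf).card
        ≤ ((Finset.powersetCard (n - mf + 1) (Finset.univ : Finset (Fin n))).biUnion
            (fun W => (lrrGraphs n d).filter fun N => ∀ u ∈ W, ¬ Disjoint (N u) T)).card :=
          Finset.card_le_card hsub2
      _ ≤ ∑ W ∈ Finset.powersetCard (n - mf + 1) (Finset.univ : Finset (Fin n)),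
            ((lrrGraphs n d).filter fun N => ∀ u ∈ W, ¬ Disjoint (N u) T).card :=
          Finset.card_biUnion_le
      _ ≤ ∑ _W ∈ Finset.powersetCard (n - mf + 1) (Finset.univ : Finset (Fin n)),
            ((J * (n-1).choose (d-1)) ^ (n - mf + 1) * (n.choose d)^(mf - 1)) :=
          Finset.sum_le_sum hperW
      _ = n.choose (n - mf + 1)
            * ((J * (n-1).choose (d-1)) ^ (n - mf + 1) * (n.choose d)^(mf - 1)) := by
          rw [Finset.sum_const, smul_eq_mul, Finset.card_powersetCard,
            Finset.card_univ, Fintype.card_fin]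
  calc ((lrrGraphs n d).filter fun N => ¬ FreshEvent J mf N).card
      ≤ ((Finset.powersetCard J (Finset.univ : Finset (Fin n))).biUnion
          (fun T => (lrrGraphs n d).filter fun N =>
            (Finset.univ.filter fun u => Disjoint (N u) T).card < mf)).card :=
        Finset.card_le_card hstep1
    _ ≤ ∑ T ∈ Finset.powersetCard J (Finset.univ : Finset (Fin n)),
          ((lrrGraphs n d).filter fun N =>
            (Finset.univ.filter fun u => Disjoint (N u) T).card < mf).card :=
        Finset.card_biUnion_le
    _ ≤ ∑ _T ∈ Finset.powersetCard J (Finset.univ : Finset (Fin n)),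
          (n.choose (n - mf + 1)
            * ((J * (n-1).choose (d-1)) ^ (n - mf + 1) * (n.choose d)^(mf - 1))) :=
        Finset.sum_le_sum (fun T hT => hinner T (Finset.mem_powersetCard.mp hT).2)
    _ = n.choose J * (n.choose (n - mf + 1)
          * ((J * (n-1).choose (d-1)) ^ (n - mf + 1) * (n.choose d)^(mf - 1))) := by
        rw [Finset.sum_const, smul_eq_mul, Finset.card_powersetCard,
          Finset.card_univ, Fintype.card_fin]

end Counting
section Numeric

lemma choose_le_pow15 (n t : ℕ) : (n.choose t : ℝ) ≤ (16/15)^n * 15^t := by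
  by_cases ht : t ≤ n
  · have hbt := add_pow ((1:ℝ)/15) 1 n
    have hterm : ((1:ℝ)/15)^t * 1^(n-t) * (n.choose t : ℝ)
        ≤ ∑ m ∈ Finset.range (n+1), ((1:ℝ)/15)^m * 1^(n-m) * (n.choose m : ℝ) := by
      apply Finset.single_le_sum (f := fun m => ((1:ℝ)/15)^m * 1^(n-m) * (n.choose m : ℝ))
      · intro i _
        positivity
      · exact Finset.mem_range.mpr (by omega)
    rw [← hbt] at hterm
    have h115 : ((1:ℝ)/15 + 1) = 16/15 := by norm_num
    rw [h115, one_pow, mul_one] at hterm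
    have h15 : (0:ℝ) < 15^t := by positivity
    have := mul_le_mul_of_nonneg_right hterm (le_of_lt h15)
    calc (n.choose t : ℝ) = ((1:ℝ)/15)^t * (n.choose t : ℝ) * 15^t := by
          rw [div_pow, one_pow]
          field_simp
      _ ≤ (16/15)^n * 15^t := this
  · rw [Nat.choose_eq_zero_of_lt (by omega)]
    push_cast
    positivity

lemma fifteen_le_exp3 : (15:ℝ) ≤ Real.exp 3 := by
  have h1 : Real.exp 3 = (Real.exp 1)^3 := by
    rw [← Real.exp_nat_mul]
    norm_num
  have h2 : (2.7182818283:ℝ) < Real.exp 1 := Real.exp_one_gt_d9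
  have h3 : (15:ℝ) ≤ (2.7182818283:ℝ)^3 := by norm_num
  calc (15:ℝ) ≤ (2.7182818283:ℝ)^3 := h3
    _ ≤ (Real.exp 1)^3 := by
        apply pow_le_pow_left₀ (by norm_num) (le_of_lt h2)
    _ = Real.exp 3 := h1.symm

lemma half_le_exp : ((1:ℝ)/2) ≤ Real.exp (-(2/3)) := by
  have h2 : Real.exp (2/3) ≤ 2 := by
    have hp : (Real.exp (2/3))^3 = Real.exp 2 := by
      rw [← Real.exp_nat_mul]
      norm_num
    have he2 : Real.exp 2 ≤ 8 := by
      have h22 : Real.exp 2 = (Real.exp 1)^2 := by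
        rw [← Real.exp_nat_mul]; norm_num
      rw [h22]
      have := Real.exp_one_lt_d9
      nlinarith [Real.exp_pos 1]
    have : (Real.exp (2/3))^3 ≤ 2^3 := by rw [hp]; norm_num [he2]
    exact le_of_pow_le_pow_left₀ (by norm_num) (by norm_num) this
  rw [Real.exp_neg, one_div]
  exact inv_anti₀ (Real.exp_pos _) h2

lemma sixteen15_le_exp : (16/15:ℝ) ≤ Real.exp (1/15) := by
  have := Real.add_one_le_exp ((1:ℝ)/15)
  linarith

lemma one_sub_mul_exp_le {x : ℝ} (h0 : 0 ≤ x) (h1 : x ≤ 1) :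
    (1 - x) * Real.exp x ≤ 1 - x^2/4 := by
  have hb := Real.exp_bound (x := x) (by rw [abs_of_nonneg h0]; exact h1) (n := 2) (by norm_num)
  have hsum : ∑ m ∈ Finset.range 2, x ^ m / (m.factorial : ℝ) = 1 + x := by
    simp [Finset.sum_range_succ]
  rw [hsum, abs_of_nonneg h0] at hb
  have hb2 := (abs_le.mp hb).2
  have hfac : (((2:ℕ).succ : ℝ) / (((2:ℕ).factorial : ℝ) * ((2:ℕ):ℝ))) = 3/4 := by
    norm_num [Nat.factorial]
  rw [hfac] at hb2
  nlinarith [sq_nonneg x, Real.exp_pos x]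

lemma pow_one_sub_le {k mm : ℕ} (hk : 1 ≤ k) (hmk : mm ≤ k) :
    (1 - 1/(k:ℝ))^(k - mm) ≤ Real.exp ((mm:ℝ)/k - 1) := by
  have hk0 : (0:ℝ) < k := by exact_mod_cast hk
  have hbase0 : (0:ℝ) ≤ 1 - 1/(k:ℝ) := by
    have : 1/(k:ℝ) ≤ 1 := by rw [div_le_one hk0]; exact_mod_cast hk
    linarith
  have hbase : 1 - 1/(k:ℝ) ≤ Real.exp (-(1/(k:ℝ))) := by
    have := Real.add_one_le_exp (-(1/(k:ℝ)))
    linarith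
  calc (1 - 1/(k:ℝ))^(k - mm) ≤ (Real.exp (-(1/(k:ℝ))))^(k - mm) :=
        pow_le_pow_left₀ hbase0 hbase _
    _ = Real.exp (((k - mm : ℕ):ℝ) * (-(1/(k:ℝ)))) := by
        rw [← Real.exp_nat_mul]
    _ = Real.exp ((mm:ℝ)/k - 1) := by
        congr 1
        rw [Nat.cast_sub hmk]
        field_simp
        ring

lemma nat_le_exp_div10 {n : ℕ} (hn : 400 ≤ n) : (n:ℝ) ≤ Real.exp ((n:ℝ)/10) := by
  have h1 : Real.exp ((n:ℝ)/10) = (Real.exp ((n:ℝ)/20))^2 := by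
    rw [← Real.exp_nat_mul]
    congr 1
    push_cast
    ring
  have h2 : 1 + (n:ℝ)/20 ≤ Real.exp ((n:ℝ)/20) := by
    have := Real.add_one_le_exp ((n:ℝ)/20)
    linarith
  have hn' : (400:ℝ) ≤ n := by exact_mod_cast hn
  calc (n:ℝ) ≤ (1 + (n:ℝ)/20)^2 := by nlinarith
    _ ≤ (Real.exp ((n:ℝ)/20))^2 := by
        apply pow_le_pow_left₀ (by positivity) h2
    _ = Real.exp ((n:ℝ)/10) := h1.symm

lemma exp_le_eps {ε : ℝ} {n : ℕ} (hε0 : 0 < ε) (hε1 : ε < 1) (hn : 4800/ε ≤ (n:ℝ)) :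
    Real.exp (-((n:ℝ)/10)) ≤ (ε/20)^24 := by
  set a : ℝ := 20/ε with ha
  have ha0 : 0 < a := by positivity
  have h1 : a ≤ 1 + (n:ℝ)/240 := by
    have : 240 * a ≤ (n:ℝ) := by
      rw [ha]
      calc 240 * (20/ε) = 4800/ε := by ring
        _ ≤ (n:ℝ) := hn
    linarith
  have h2 : a ≤ Real.exp ((n:ℝ)/240) := le_trans h1 (by linarith [Real.add_one_le_exp ((n:ℝ)/240)])
  have h3 : a^24 ≤ Real.exp ((n:ℝ)/10) := by
    calc a^24 ≤ (Real.exp ((n:ℝ)/240))^24 := pow_le_pow_left₀ (le_of_lt ha0) h2 _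
      _ = Real.exp (((24:ℕ):ℝ) * ((n:ℝ)/240)) := by rw [← Real.exp_nat_mul]
      _ = Real.exp ((n:ℝ)/10) := by
          congr 1
          push_cast
          ring
  have h4 : (ε/20)^24 = (a^24)⁻¹ := by
    rw [ha]
    rw [← inv_pow]
    congr 1
    field_simp
  rw [Real.exp_neg, h4]
  apply inv_anti₀ (by positivity) h3

end Numeric
section Pointwise

lemma greedy_det_bound {n d k J mf : ℕ} {N : Fin n → Finset (Fin n)} {c2 : ℝ}
    (hNd : ∀ i, (N i).card = d)
    (hE : FreshEvent J mf N) (hJn : J ≤ n) (hmJ : (mf - 1) * d ≤ J)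
    (hk : 1 ≤ k) (hmf : 1 ≤ mf)
    (hc2 : 0 ≤ c2) (hc2e : 1 - 1/Real.exp 1 + c2 ≤ 1)
    (hc2x : mf ≤ k → c2 ≤ ((mf:ℝ)/k)^2/(4*Real.exp 1)) :
    (1 - 1/Real.exp 1 + c2) * (optValue N k : ℝ)
      ≤ (((greedy N k).biUnion N).card : ℝ) := by
  have hk0 : (0:ℝ) < k := by exact_mod_cast hk
  have hOPT0 : (0:ℝ) ≤ (optValue N k : ℝ) := by positivity
  by_cases hmk : mf ≤ k
  · -- case III-b
    set x : ℝ := (mf:ℝ)/k with hxdef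
    have hx0 : 0 < x := by positivity
    have hx1 : x ≤ 1 := by
      rw [hxdef, div_le_one hk0]
      exact_mod_cast hmk
    have hcovm : ((mf * d : ℕ) : ℝ) ≤ (((greedy N mf).biUnion N).card : ℝ) := by
      exact_mod_cast fresh_cov hNd hE hJn hmJ mf le_rfl
    by_cases hOle : (optValue N k : ℝ) ≤ ((mf * d : ℕ) : ℝ)
    · have hck : (((greedy N mf).biUnion N).card : ℝ)
          ≤ (((greedy N k).biUnion N).card : ℝ) := by
        exact_mod_cast cov_mono N hmk
      nlinarith
    · push_neg at hOle
      have hiter := greedy_recursion_iter N hk mf (k - mf)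
      rw [Nat.add_sub_cancel' hmk] at hiter
      have hq0 : (0:ℝ) ≤ (1 - 1/(k:ℝ))^(k - mf) := by
        apply pow_nonneg
        have : 1/(k:ℝ) ≤ 1 := by rw [div_le_one hk0]; exact_mod_cast hk
        linarith
      have h1 : (optValue N k : ℝ) - (((greedy N k).biUnion N).card : ℝ)
          ≤ (1 - 1/(k:ℝ))^(k - mf) * ((optValue N k : ℝ) - ((mf * d : ℕ) : ℝ)) := by
        calc (optValue N k : ℝ) - (((greedy N k).biUnion N).card : ℝ)
            ≤ (1 - 1/(k:ℝ))^(k - mf)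
              * ((optValue N k : ℝ) - (((greedy N mf).biUnion N).card : ℝ)) := hiter
          _ ≤ (1 - 1/(k:ℝ))^(k - mf) * ((optValue N k : ℝ) - ((mf * d : ℕ) : ℝ)) := by
              apply mul_le_mul_of_nonneg_left _ hq0
              linarith
      have h2 : (optValue N k : ℝ) - (((greedy N k).biUnion N).card : ℝ)
          ≤ Real.exp (x - 1) * ((optValue N k : ℝ) - ((mf * d : ℕ) : ℝ)) := by
        calc (optValue N k : ℝ) - (((greedy N k).biUnion N).card : ℝ)
            ≤ (1 - 1/(k:ℝ))^(k - mf) * ((optValue N k : ℝ) - ((mf * d : ℕ) : ℝ)) := h1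
          _ ≤ Real.exp (x - 1) * ((optValue N k : ℝ) - ((mf * d : ℕ) : ℝ)) := by
              apply mul_le_mul_of_nonneg_right (pow_one_sub_le hk hmk)
              linarith
      have hxOPT : x * (optValue N k : ℝ) ≤ ((mf * d : ℕ) : ℝ) := by
        have hkd : (optValue N k : ℝ) ≤ (k:ℝ) * d := by
          exact_mod_cast optValue_le_mul N hNd
        have : x * (optValue N k : ℝ) ≤ x * ((k:ℝ)*d) :=
          mul_le_mul_of_nonneg_left hkd (le_of_lt hx0)
        have hxkd : x * ((k:ℝ)*d) = ((mf * d : ℕ) : ℝ) := by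
          rw [hxdef]
          push_cast
          field_simp
        linarith
      have h3 : (optValue N k : ℝ) - (((greedy N k).biUnion N).card : ℝ)
          ≤ Real.exp (x - 1) * ((1 - x) * (optValue N k : ℝ)) := by
        calc (optValue N k : ℝ) - (((greedy N k).biUnion N).card : ℝ)
            ≤ Real.exp (x - 1) * ((optValue N k : ℝ) - ((mf * d : ℕ) : ℝ)) := h2
          _ ≤ Real.exp (x - 1) * ((1 - x) * (optValue N k : ℝ)) := by
              apply mul_le_mul_of_nonneg_left _ (le_of_lt (Real.exp_pos _))
              nlinarith
      have hquart : (1 - x) * Real.exp x ≤ 1 - x^2/4 :=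
        one_sub_mul_exp_le (le_of_lt hx0) hx1
      have hexpsplit : Real.exp (x - 1) = Real.exp x / Real.exp 1 := by
        rw [← Real.exp_sub]
      have he1 : (0:ℝ) < Real.exp 1 := Real.exp_pos 1
      have key : Real.exp (x - 1) * (1 - x) ≤ (1 - x^2/4) / Real.exp 1 := by
        rw [hexpsplit, div_mul_eq_mul_div, div_le_div_iff₀ he1 he1]
        calc Real.exp x * (1 - x) * Real.exp 1
            = ((1 - x) * Real.exp x) * Real.exp 1 := by ring
          _ ≤ (1 - x^2/4) * Real.exp 1 :=
              mul_le_mul_of_nonneg_right hquart (le_of_lt he1)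
      have h4 : Real.exp (x - 1) * ((1 - x) * (optValue N k : ℝ))
          ≤ (1 - x^2/4) / Real.exp 1 * (optValue N k : ℝ) := by
        calc Real.exp (x - 1) * ((1 - x) * (optValue N k : ℝ))
            = (Real.exp (x - 1) * (1 - x)) * (optValue N k : ℝ) := by ring
          _ ≤ (1 - x^2/4) / Real.exp 1 * (optValue N k : ℝ) :=
              mul_le_mul_of_nonneg_right key hOPT0
      have hc2' : c2 ≤ x^2/(4*Real.exp 1) := hc2x hmk
      have hfinal : (1 - 1/Real.exp 1 + c2) * (optValue N k : ℝ)
          ≤ (1 - (1 - x^2/4) / Real.exp 1) * (optValue N k : ℝ) := by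
        apply mul_le_mul_of_nonneg_right _ hOPT0
        have hxe : x^2/(4*Real.exp 1) = (x^2/4)/Real.exp 1 := by ring
        rw [hxe] at hc2'
        have : (1 - x^2/4) / Real.exp 1 = 1/Real.exp 1 - (x^2/4)/Real.exp 1 := by
          field_simp
        rw [this]
        linarith
      have h5 : (1 - (1 - x^2/4) / Real.exp 1) * (optValue N k : ℝ)
          ≤ (((greedy N k).biUnion N).card : ℝ) := by
        have hexpand : (1 - (1 - x^2/4) / Real.exp 1) * (optValue N k : ℝ)
            = (optValue N k : ℝ) - (1 - x^2/4) / Real.exp 1 * (optValue N k : ℝ) := by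
          ring
        rw [hexpand]
        linarith
      linarith
  · -- case III-a : k < mf
    push_neg at hmk
    have hcovk : ((k * d : ℕ) : ℝ) ≤ (((greedy N k).biUnion N).card : ℝ) := by
      exact_mod_cast fresh_cov hNd hE hJn hmJ k (by omega)
    have hkd : (optValue N k : ℝ) ≤ ((k * d : ℕ) : ℝ) := by
      exact_mod_cast optValue_le_mul N hNd
    nlinarith

end Pointwise
section BadRatio

lemma bb_half {n d J : ℕ} (hd : 1 ≤ d) (hn : 1 ≤ n) (h2 : 2 * J * d ≤ n) :
    2 * (J * (n-1).choose (d-1)) ≤ n.choose d := by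
  have key : 2 * (J * (n-1).choose (d-1)) * d ≤ n.choose d * d := by
    calc 2 * (J * (n-1).choose (d-1)) * d
        = (2 * J * d) * (n-1).choose (d-1) := by ring
      _ ≤ n * (n-1).choose (d-1) := Nat.mul_le_mul_right _ h2
      _ = n.choose d * d := choose_id hd hn
  exact Nat.le_of_mul_le_mul_right key (by omega)

lemma choose_le_exp (n t : ℕ) : ((n.choose t):ℝ) ≤ Real.exp ((n:ℝ)/15 + 3*t) := by
  calc ((n.choose t):ℝ) ≤ (16/15)^n * 15^t := choose_le_pow15 n t
    _ ≤ (Real.exp (1/15))^n * (Real.exp 3)^t := by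
        apply mul_le_mul
        · exact pow_le_pow_left₀ (by norm_num) sixteen15_le_exp n
        · exact pow_le_pow_left₀ (by norm_num) fifteen_le_exp3 t
        · positivity
        · positivity
    _ = Real.exp ((n:ℝ)/15 + 3*t) := by
        rw [← Real.exp_nat_mul, ← Real.exp_nat_mul, ← Real.exp_add]
        congr 1
        ring

lemma half_pow_le_exp (s : ℕ) : ((1:ℝ)/2)^s ≤ Real.exp (-(2/3) * s) := by
  calc ((1:ℝ)/2)^s ≤ (Real.exp (-(2/3)))^s := pow_le_pow_left₀ (by norm_num) half_le_exp s
    _ = Real.exp (-(2/3) * s) := by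
        rw [← Real.exp_nat_mul]
        congr 1
        ring

open scoped Classical in
lemma bad_ratio {n d J mf : ℕ} (hd : 1 ≤ d) (hn : 1 ≤ n) (hmf : 1 ≤ mf) (hmfn : mf ≤ n)
    (h2Jd : 2*J*d ≤ n)
    (hexp : (n:ℝ)/15 + 3*J + ((n:ℝ)/15 + 3*((mf:ℝ)-1)) + (-(2/3) * ((n:ℝ) - mf + 1))
      ≤ -((n:ℝ)/5)) :
    (((lrrGraphs n d).filter fun N => ¬ FreshEvent J mf N).card : ℝ)
      ≤ Real.exp (-((n:ℝ)/5)) * ((lrrGraphs n d).card : ℝ) := by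
  set s : ℕ := n - mf + 1 with hs
  have hcount := count_bad (n := n) (d := d) J mf hd hmf hmfn
  have hcast : (((lrrGraphs n d).filter fun N => ¬ FreshEvent J mf N).card : ℝ)
      ≤ ((n.choose J : ℕ):ℝ) * (((n.choose s : ℕ):ℝ)
        * (((J * (n-1).choose (d-1) : ℕ):ℝ)^s * ((n.choose d : ℕ):ℝ)^(mf-1))) := by
    exact_mod_cast hcount
  have hbbR : ((J * (n-1).choose (d-1) : ℕ):ℝ) ≤ ((n.choose d : ℕ):ℝ)/2 := by
    have h2' : ((2 * (J * (n-1).choose (d-1)) : ℕ):ℝ) ≤ ((n.choose d : ℕ):ℝ) := by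
      exact_mod_cast bb_half hd hn h2Jd
    push_cast at h2' ⊢
    linarith
  have hbbpow : ((J * (n-1).choose (d-1) : ℕ):ℝ)^s ≤ (((n.choose d : ℕ):ℝ)/2)^s := by
    apply pow_le_pow_left₀ (by positivity) hbbR
  have hsymm : n.choose s = n.choose (mf - 1) := by
    have h1 : s ≤ n := by omega
    have := Nat.choose_symm h1
    rw [← this]
    congr 1
    omega
  have hC0 : (0:ℝ) ≤ ((n.choose d : ℕ):ℝ) := by positivity
  have hsplit : (((n.choose d : ℕ):ℝ)/2)^s = ((1:ℝ)/2)^s * ((n.choose d : ℕ):ℝ)^s := by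
    rw [div_pow, div_pow, one_pow]
    ring
  have hpowadd : ((n.choose d : ℕ):ℝ)^s * ((n.choose d : ℕ):ℝ)^(mf-1)
      = ((n.choose d : ℕ):ℝ)^n := by
    rw [← pow_add]
    congr 1
    omega
  have hchain : (((lrrGraphs n d).filter fun N => ¬ FreshEvent J mf N).card : ℝ)
      ≤ (((n.choose J : ℕ):ℝ) * ((n.choose (mf-1) : ℕ):ℝ) * ((1:ℝ)/2)^s)
        * ((n.choose d : ℕ):ℝ)^n := by
    calc (((lrrGraphs n d).filter fun N => ¬ FreshEvent J mf N).card : ℝ)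
        ≤ ((n.choose J : ℕ):ℝ) * (((n.choose s : ℕ):ℝ)
          * (((J * (n-1).choose (d-1) : ℕ):ℝ)^s * ((n.choose d : ℕ):ℝ)^(mf-1))) := hcast
      _ ≤ ((n.choose J : ℕ):ℝ) * (((n.choose s : ℕ):ℝ)
          * ((((n.choose d : ℕ):ℝ)/2)^s * ((n.choose d : ℕ):ℝ)^(mf-1))) := by
          apply mul_le_mul_of_nonneg_left _ (by positivity)
          apply mul_le_mul_of_nonneg_left _ (by positivity)
          apply mul_le_mul_of_nonneg_right hbbpow (by positivity)
      _ = (((n.choose J : ℕ):ℝ) * ((n.choose (mf-1) : ℕ):ℝ) * ((1:ℝ)/2)^s)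
          * ((n.choose d : ℕ):ℝ)^n := by
          rw [hsymm, hsplit, ← hpowadd]
          ring
  have hexps : (((n.choose J : ℕ):ℝ) * ((n.choose (mf-1) : ℕ):ℝ) * ((1:ℝ)/2)^s)
      ≤ Real.exp (-((n:ℝ)/5)) := by
    have e1 := choose_le_exp n J
    have e2 := choose_le_exp n (mf-1)
    have e3 := half_pow_le_exp s
    have hscast : ((s:ℕ):ℝ) = (n:ℝ) - mf + 1 := by
      rw [hs]
      push_cast [Nat.cast_sub hmfn]
      ring
    have hm1cast : (((mf-1):ℕ):ℝ) = (mf:ℝ) - 1 := by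
      push_cast [Nat.cast_sub hmf]
      ring
    calc (((n.choose J : ℕ):ℝ) * ((n.choose (mf-1) : ℕ):ℝ) * ((1:ℝ)/2)^s)
        ≤ Real.exp ((n:ℝ)/15 + 3*J) * Real.exp ((n:ℝ)/15 + 3*((mf-1:ℕ):ℝ))
          * Real.exp (-(2/3) * ((s:ℕ):ℝ)) := by
          apply mul_le_mul
          · apply mul_le_mul e1 e2 (by positivity) (by positivity)
          · exact e3
          · positivity
          · positivity
      _ = Real.exp ((n:ℝ)/15 + 3*J + ((n:ℝ)/15 + 3*((mf-1:ℕ):ℝ))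
            + (-(2/3) * ((s:ℕ):ℝ))) := by
          rw [← Real.exp_add, ← Real.exp_add]
      _ ≤ Real.exp (-((n:ℝ)/5)) := by
          apply Real.exp_le_exp.mpr
          rw [hscast, hm1cast]
          exact hexp
  calc (((lrrGraphs n d).filter fun N => ¬ FreshEvent J mf N).card : ℝ)
      ≤ (((n.choose J : ℕ):ℝ) * ((n.choose (mf-1) : ℕ):ℝ) * ((1:ℝ)/2)^s)
        * ((n.choose d : ℕ):ℝ)^n := hchain
    _ ≤ Real.exp (-((n:ℝ)/5)) * ((n.choose d : ℕ):ℝ)^n := by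
        apply mul_le_mul_of_nonneg_right hexps (by positivity)
    _ = Real.exp (-((n:ℝ)/5)) * ((lrrGraphs n d).card : ℝ) := by
        rw [card_lrr]
        push_cast
        ring

end BadRatio

section SmallD

lemma d1_bound {n k : ℕ} {N : Fin n → Finset (Fin n)} (hNd : ∀ i, (N i).card = 1) :
    optValue N k ≤ ((greedy N k).biUnion N).card := by
  have h1 := greedy_min N k k
  have h2 : optValue N k ≤ k * 1 := optValue_le_mul N hNd
  rw [mul_one] at h2
  omega

lemma opt_ge_d {n d k : ℕ} {N : Fin n → Finset (Fin n)} (hn : 1 ≤ n) (hk : 1 ≤ k)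
    (hNd : ∀ i, (N i).card = d) : d ≤ optValue N k := by
  have hS : ({(⟨0, by omega⟩ : Fin n)} : Finset (Fin n)).card ≤ k := by simp [hk]
  have := le_optValue N (S := {(⟨0, by omega⟩ : Fin n)}) (k := k) hS
  rw [Finset.singleton_biUnion] at this
  rw [hNd] at this
  exact this

end SmallD
section MainCase

lemma exp_one_le_three : Real.exp 1 ≤ 3 := by
  have := Real.exp_one_lt_d9
  linarith only [this]

lemma lrr_card_pos {n d : ℕ} (hdn : d ≤ n) : 0 < (lrrGraphs n d).card := by
  rw [card_lrr]
  exact pow_pos (Nat.choose_pos hdn) n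

set_option maxHeartbeats 1000000 in
open scoped Classical in
lemma sum_bound_d2 {n d k : ℕ} {ε : ℝ} (hε0 : 0 < ε) (hε1 : ε < 1)
    (hd2 : 2 ≤ d) (hk1 : 1 ≤ k) (hn400 : 400 ≤ n)
    (hdD : (d:ℝ) ≤ 20^4/ε^8)
    (hkup : (k:ℝ) ≤ 2*n/(ε*d))
    (hn17 : (20/ε)^17 ≤ (n:ℝ)) :
    (1 - 1/Real.exp 1 + (ε/20)^24) * (∑ N ∈ lrrGraphs n d, (optValue N k : ℝ))
      ≤ ∑ N ∈ lrrGraphs n d, (((greedy N k).biUnion N).card : ℝ) := by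
  set c : ℝ := (ε/20)^24 with hc
  set Dv : ℝ := 20^4/ε^8 with hDv
  have hc0 : 0 ≤ c := by positivity
  have hDv0 : (0:ℝ) < Dv := by positivity
  have he1 : (0:ℝ) < Real.exp 1 := Real.exp_pos 1
  have he3 := exp_one_le_three
  have he1' : (1:ℝ) ≤ Real.exp 1 := by
    linarith only [Real.add_one_le_exp (1:ℝ)]
  have hd0 : (0:ℝ) < (d:ℝ) := by exact_mod_cast (by omega : 0 < d)
  have hd2R : (2:ℝ) ≤ (d:ℝ) := by exact_mod_cast hd2
  have hn0 : (0:ℝ) < (n:ℝ) := by exact_mod_cast (by omega : 0 < n)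
  have hk0 : (0:ℝ) < (k:ℝ) := by exact_mod_cast hk1
  -- c is tiny
  have hc20 : c ≤ (1/20:ℝ)^24 := by
    rw [hc]
    apply pow_le_pow_left₀ (by positivity) _ 24
    rw [div_le_div_iff₀ (by norm_num) (by norm_num)]
    linarith only [hε1]
  have hcsmall : c ≤ 1/3 := by
    have h240 : ((1/20:ℝ))^24 ≤ 1/3 := by norm_num
    linarith only [hc20, h240]
  have h13e : (1:ℝ)/3 ≤ 1/Real.exp 1 := by
    rw [div_le_div_iff₀ (by norm_num) he1]
    linarith only [he3]
  have hcoefle1 : 1 - 1/Real.exp 1 + c ≤ 1 := by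
    linarith only [h13e, hcsmall]
  have hcoef2le1 : 1 - 1/Real.exp 1 + 2*c ≤ 1 := by
    have h240 : ((1/20:ℝ))^24 ≤ 1/6 := by norm_num
    linarith only [h13e, hc20, h240]
  -- big-n facts
  have hpow178 : ε^17 ≤ ε^8 := pow_le_pow_of_le_one hε0.le hε1.le (by norm_num)
  have hpow1716 : ε^17 ≤ ε^16 := pow_le_pow_of_le_one hε0.le hε1.le (by norm_num)
  have hpow171 : ε^17 ≤ ε := by
    have h := pow_le_pow_of_le_one hε0.le hε1.le (by norm_num : 1 ≤ 17)
    calc ε^17 ≤ ε^1 := h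
      _ = ε := pow_one ε
  have hn17' : (20:ℝ)^17/ε^17 ≤ (n:ℝ) := by
    rw [div_pow] at hn17
    exact hn17
  have hDn : 96 * Dv ≤ (n:ℝ) := by
    have h1 : 96 * Dv = (96 * 20^4)/ε^8 := by rw [hDv]; ring
    have h2 : (96 * 20^4 : ℝ)/ε^8 ≤ (20:ℝ)^17/ε^17 :=
      div_le_div₀ (by positivity) (by norm_num) (by positivity) hpow178
    linarith only [h1, h2, hn17']
  have h8D2 : 8 * Dv^2 ≤ (n:ℝ) := by
    have h1 : 8 * Dv^2 = (8 * 20^8)/ε^16 := by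
      rw [hDv, div_pow]
      norm_num
      ring
    have h2 : (8 * 20^8 : ℝ)/ε^16 ≤ (20:ℝ)^17/ε^17 :=
      div_le_div₀ (by positivity) (by norm_num) (by positivity) hpow1716
    linarith only [h1, h2, hn17']
  have h4800 : 4800/ε ≤ (n:ℝ) := by
    have h2 : (4800 : ℝ)/ε ≤ (20:ℝ)^17/ε^17 :=
      div_le_div₀ (by positivity) (by norm_num) (by positivity) hpow171
    linarith only [h2, hn17']
  -- nat consequences
  have hdn : d ≤ n := by
    have hDD : Dv ≤ 96*Dv := by linarith only [hDv0]
    have : (d:ℝ) ≤ (n:ℝ) := by linarith only [hdD, hDD, hDn]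
    exact_mod_cast this
  have h8d2n : 8 * d^2 ≤ n := by
    have hdD2 : (d:ℝ)^2 ≤ Dv^2 := pow_le_pow_left₀ hd0.le hdD 2
    have : ((8 * d^2 : ℕ):ℝ) ≤ (n:ℝ) := by
      push_cast
      linarith only [hdD2, h8D2]
    exact_mod_cast this
  -- define J and mf
  set J : ℕ := n/(8*d) + d with hJ
  set mf : ℕ := n/(8*d^2) + 1 with hmf
  have hdpos : 0 < d := by omega
  have h8dpos : 0 < 8*d := by omega
  have h8d2pos : 0 < 8*d^2 := Nat.mul_pos (by norm_num) (pow_pos hdpos 2)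
  have hmf1 : 1 ≤ mf := by rw [hmf]; exact Nat.le_add_left 1 _
  have hdd32 : (32:ℕ) ≤ 8*d^2 := by
    have h1 : 2*2 ≤ d*d := Nat.mul_le_mul hd2 hd2
    calc (32:ℕ) = 8*(2*2) := by norm_num
      _ ≤ 8*(d*d) := Nat.mul_le_mul_left 8 h1
      _ = 8*d^2 := by ring
  have hdiv32 : n/(8*d^2) ≤ n/32 := Nat.div_le_div_left hdd32 (by norm_num)
  have hmfn : mf ≤ n := by
    rw [hmf]
    have h1 : n/(8*d^2) + 1 ≤ n/32 + 1 := Nat.add_le_add_right hdiv32 1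
    have h2 : n/32 + 1 ≤ n := by omega
    exact le_trans h1 h2
  have hA : (n/(8*d))*d ≤ n/8 := by
    rw [Nat.le_div_iff_mul_le (by norm_num : 0 < 8)]
    calc ((n/(8*d))*d)*8 = (n/(8*d))*(8*d) := by ring
      _ ≤ n := Nat.div_mul_le_self n (8*d)
  have hdd4 : 2*(d*d) ≤ n/4 := by
    rw [Nat.le_div_iff_mul_le (by norm_num : 0 < 4)]
    have he : 2*(d*d)*4 = 8*d^2 := by ring
    rw [he]
    exact h8d2n
  have h2Jd : 2*J*d ≤ n := by
    calc 2*J*d = 2*((n/(8*d))*d) + 2*(d*d) := by rw [hJ]; ring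
      _ ≤ 2*(n/8) + n/4 := Nat.add_le_add (Nat.mul_le_mul_left 2 hA) hdd4
      _ ≤ n := by omega
  have hJn : J ≤ n := by
    have hd8 : d ≤ n/8 := by
      rw [Nat.le_div_iff_mul_le (by norm_num : 0 < 8)]
      calc d*8 = 8*d := by ring
        _ ≤ 8*d^2 := by
            have h1 : d ≤ d*d := Nat.le_mul_of_pos_left d hdpos
            calc 8*d ≤ 8*(d*d) := Nat.mul_le_mul_left 8 h1
              _ = 8*d^2 := by ring
        _ ≤ n := h8d2n
    have hn8 : n/(8*d) ≤ n/8 := Nat.div_le_div_left (by omega) (by norm_num)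
    rw [hJ]
    calc n/(8*d) + d ≤ n/8 + n/8 := Nat.add_le_add hn8 hd8
      _ ≤ n := by omega
  have hmJ : (mf - 1) * d ≤ J := by
    have hm1 : mf - 1 = n/(8*d^2) := by rw [hmf]; omega
    rw [hm1, hJ]
    have hstep : (n/(8*d^2))*d ≤ n/(8*d) := by
      rw [Nat.le_div_iff_mul_le h8dpos]
      calc ((n/(8*d^2))*d)*(8*d) = (n/(8*d^2))*(8*d^2) := by ring
        _ ≤ n := Nat.div_mul_le_self n (8*d^2)
    exact le_trans hstep (Nat.le_add_right _ _)
  -- real casts of J, mf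
  have hJR : (J:ℝ) ≤ (n:ℝ)/16 + Dv := by
    have h1 : ((n/(8*d) : ℕ):ℝ) ≤ (n:ℝ)/(8*(d:ℝ)) := by
      calc ((n/(8*d) : ℕ):ℝ) ≤ ((n:ℕ):ℝ)/((8*d : ℕ):ℝ) := Nat.cast_div_le
        _ = (n:ℝ)/(8*(d:ℝ)) := by push_cast; ring
    have h2 : (n:ℝ)/(8*(d:ℝ)) ≤ (n:ℝ)/16 := by
      apply div_le_div_of_nonneg_left hn0.le (by norm_num)
      linarith only [hd2R]
    have h3 : (J:ℝ) = ((n/(8*d) : ℕ):ℝ) + (d:ℝ) := by rw [hJ]; push_cast; ring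
    rw [h3]
    linarith only [h1, h2, hdD]
  have hmfR : ((mf:ℝ) - 1) ≤ (n:ℝ)/32 := by
    have h1 : ((n/(8*d^2) : ℕ):ℝ) ≤ (n:ℝ)/32 := by
      calc ((n/(8*d^2) : ℕ):ℝ) ≤ ((n/32 : ℕ):ℝ) := by exact_mod_cast hdiv32
        _ ≤ ((n:ℕ):ℝ)/((32:ℕ):ℝ) := Nat.cast_div_le
        _ = (n:ℝ)/32 := by norm_num
    have h2 : (mf:ℝ) = ((n/(8*d^2) : ℕ):ℝ) + 1 := by rw [hmf]; push_cast; ring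
    rw [h2]
    linarith only [h1]
  have hmfR' : (n:ℝ)/(8*(d:ℝ)^2) ≤ (mf:ℝ) := by
    have hdm := Nat.div_add_mod n (8*d^2)
    have hmd : n % (8*d^2) < 8*d^2 := Nat.mod_lt n h8d2pos
    have hcast : (n:ℝ) = (8*(d:ℝ)^2) * ((n/(8*d^2) : ℕ):ℝ) + ((n % (8*d^2) : ℕ):ℝ) := by
      exact_mod_cast congrArg (Nat.cast : ℕ → ℝ) hdm.symm
    have hmdR : ((n % (8*d^2) : ℕ):ℝ) < 8*(d:ℝ)^2 := by exact_mod_cast hmd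
    have h2 : (mf:ℝ) = ((n/(8*d^2) : ℕ):ℝ) + 1 := by rw [hmf]; push_cast; ring
    rw [h2]
    rw [div_le_iff₀ (by positivity)]
    have hexpand : (((n/(8*d^2) : ℕ):ℝ) + 1)*(8*(d:ℝ)^2)
        = (8*(d:ℝ)^2) * ((n/(8*d^2) : ℕ):ℝ) + 8*(d:ℝ)^2 := by ring
    rw [hexpand]
    linarith only [hcast, hmdR]
  -- exponent condition
  have hexpcond : (n:ℝ)/15 + 3*J + ((n:ℝ)/15 + 3*((mf:ℝ)-1)) + (-(2/3) * ((n:ℝ) - mf + 1))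
      ≤ -((n:ℝ)/5) := by
    linarith only [hJR, hmfR, hDn]
  -- bad set bound
  have hbad := bad_ratio (n := n) (d := d) (J := J) (mf := mf)
    (by omega) (by omega) hmf1 hmfn h2Jd hexpcond
  set W : ℝ := ((lrrGraphs n d).card : ℝ) with hW
  set B : ℝ := (((lrrGraphs n d).filter fun N => ¬ FreshEvent J mf N).card : ℝ) with hB
  have hW0 : 0 < W := by
    rw [hW]
    exact_mod_cast lrr_card_pos hdn
  have hB0 : 0 ≤ B := by rw [hB]; positivity
  -- n * exp(-n/5) ≤ c
  have hnexp : (n:ℝ) * Real.exp (-((n:ℝ)/5)) ≤ c := by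
    have e1 : (n:ℝ) ≤ Real.exp ((n:ℝ)/10) := nat_le_exp_div10 hn400
    have e2 : Real.exp (-((n:ℝ)/10)) ≤ c := by
      rw [hc]
      exact exp_le_eps hε0 hε1 h4800
    have e3 : Real.exp (-((n:ℝ)/5)) = Real.exp (-((n:ℝ)/10)) * Real.exp (-((n:ℝ)/10)) := by
      rw [← Real.exp_add]
      congr 1
      ring
    have e4 : (n:ℝ) * Real.exp (-((n:ℝ)/10)) ≤ 1 := by
      calc (n:ℝ) * Real.exp (-((n:ℝ)/10))
          ≤ Real.exp ((n:ℝ)/10) * Real.exp (-((n:ℝ)/10)) :=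
            mul_le_mul_of_nonneg_right e1 (Real.exp_pos _).le
        _ = 1 := by rw [← Real.exp_add]; simp
    calc (n:ℝ) * Real.exp (-((n:ℝ)/5))
        = ((n:ℝ) * Real.exp (-((n:ℝ)/10))) * Real.exp (-((n:ℝ)/10)) := by
          rw [e3]; ring
      _ ≤ 1 * Real.exp (-((n:ℝ)/10)) :=
          mul_le_mul_of_nonneg_right e4 (Real.exp_pos _).le
      _ = Real.exp (-((n:ℝ)/10)) := by ring
      _ ≤ c := e2
  have hBn : B * (n:ℝ) ≤ c * W := by
    calc B * (n:ℝ) ≤ (Real.exp (-((n:ℝ)/5)) * W) * (n:ℝ) :=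
          mul_le_mul_of_nonneg_right hbad (by positivity)
      _ = ((n:ℝ) * Real.exp (-((n:ℝ)/5))) * W := by ring
      _ ≤ c * W := mul_le_mul_of_nonneg_right hnexp hW0.le
  -- c2 condition for pointwise bound
  have hεd0 : (0:ℝ) < ε*(d:ℝ) := by positivity
  have hkεd : (k:ℝ) * (ε*(d:ℝ)) ≤ 2*n := by
    rw [le_div_iff₀ hεd0] at hkup
    exact hkup
  have hc2x : mf ≤ k → 2*c ≤ ((mf:ℝ)/k)^2/(4*Real.exp 1) := by
    intro _
    set x : ℝ := (mf:ℝ)/k with hx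
    have hxlow : ε/(16*(d:ℝ)) ≤ x := by
      have h2 : (n:ℝ)/(8*(d:ℝ)^2)/(k:ℝ) ≤ x := by
        rw [hx]
        exact (div_le_div_iff_of_pos_right hk0).mpr hmfR'
      have h3 : ε/(16*(d:ℝ)) ≤ (n:ℝ)/(8*(d:ℝ)^2)/(k:ℝ) := by
        rw [div_div, div_le_div_iff₀ (by positivity) (by positivity)]
        have hm := mul_le_mul_of_nonneg_right hkεd (by positivity : (0:ℝ) ≤ 8*(d:ℝ))
        nlinarith only [hm]
      linarith only [h2, h3]
    have hx0 : 0 ≤ x := by positivity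
    have h4 : ε/(16*Dv) ≤ ε/(16*(d:ℝ)) := by
      apply div_le_div_of_nonneg_left hε0.le (by positivity)
      linarith only [hdD]
    have h5 : ε/(16*Dv) = ε^9/(16*20^4) := by
      rw [hDv]
      field_simp
    have hxa : ε^9/(16*20^4) ≤ x := by
      rw [← h5]
      linarith only [h4, hxlow]
    have ha0 : (0:ℝ) ≤ ε^9/(16*20^4) := by positivity
    have hxsq : (ε^9/(16*20^4))^2 ≤ x^2 := pow_le_pow_left₀ ha0 hxa 2
    have hsqval : ((ε^9/(16*20^4)):ℝ)^2 = ε^18/(256*20^8) := by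
      rw [div_pow]
      norm_num
      ring
    rw [le_div_iff₀ (by positivity : (0:ℝ) < 4*Real.exp 1)]
    have hcc : c = ε^24/20^24 := by rw [hc, div_pow]
    have h6 : ε^24 ≤ ε^18 := pow_le_pow_of_le_one hε0.le hε1.le (by norm_num)
    have h7 : (2*c)*(4*Real.exp 1) ≤ 24*(ε^18/(20:ℝ)^24) := by
      rw [hcc]
      have hval0 : (0:ℝ) ≤ ε^24/(20:ℝ)^24 := by positivity
      have hh : (ε^24/(20:ℝ)^24) * Real.exp 1 ≤ (ε^24/(20:ℝ)^24) * 3 :=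
        mul_le_mul_of_nonneg_left he3 hval0
      have h61 : ε^24/(20:ℝ)^24 ≤ ε^18/(20:ℝ)^24 :=
        (div_le_div_iff_of_pos_right (by positivity)).mpr h6
      nlinarith only [hh, h61, hval0]
    have h8 : (24:ℝ)*(ε^18/(20:ℝ)^24) ≤ ε^18/(256*20^8) := by
      have hfac : (24:ℝ)*(ε^18/(20:ℝ)^24) = ε^18 * (24/(20:ℝ)^24) := by ring
      have hfac2 : ε^18/(256*(20:ℝ)^8) = ε^18 * (1/(256*(20:ℝ)^8)) := by ring
      rw [hfac, hfac2]
      apply mul_le_mul_of_nonneg_left _ (by positivity)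
      rw [div_le_div_iff₀ (by positivity) (by positivity)]
      norm_num
    calc (2*c)*(4*Real.exp 1) ≤ 24*(ε^18/(20:ℝ)^24) := h7
      _ ≤ ε^18/(256*20^8) := h8
      _ = (ε^9/(16*20^4))^2 := hsqval.symm
      _ ≤ x^2 := hxsq
  -- pointwise bound on good graphs
  have hpg : ∀ N ∈ (lrrGraphs n d).filter (fun N => FreshEvent J mf N),
      (1 - 1/Real.exp 1 + 2*c) * (optValue N k : ℝ)
        ≤ (((greedy N k).biUnion N).card : ℝ) := by
    intro N hN
    rw [Finset.mem_filter] at hN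
    obtain ⟨hNΩ, hNE⟩ := hN
    have hNd : ∀ i, (N i).card = d := by
      rw [lrrGraphs, Finset.mem_filter] at hNΩ
      exact hNΩ.2
    exact greedy_det_bound hNd hNE hJn hmJ hk1 hmf1 (by positivity) hcoef2le1 hc2x
  -- sums
  have hsumg : (1 - 1/Real.exp 1 + 2*c)
      * (∑ N ∈ (lrrGraphs n d).filter (fun N => FreshEvent J mf N), (optValue N k : ℝ))
      ≤ ∑ N ∈ (lrrGraphs n d).filter (fun N => FreshEvent J mf N),
          (((greedy N k).biUnion N).card : ℝ) := by
    rw [Finset.mul_sum]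
    exact Finset.sum_le_sum hpg
  have hcovsplit : ∑ N ∈ lrrGraphs n d, (((greedy N k).biUnion N).card : ℝ)
      = (∑ N ∈ (lrrGraphs n d).filter (fun N => FreshEvent J mf N),
          (((greedy N k).biUnion N).card : ℝ))
        + ∑ N ∈ (lrrGraphs n d).filter (fun N => ¬ FreshEvent J mf N),
            (((greedy N k).biUnion N).card : ℝ) :=
    (Finset.sum_filter_add_sum_filter_not _ _ _).symm
  have hoptsplit : ∑ N ∈ lrrGraphs n d, (optValue N k : ℝ)
      = (∑ N ∈ (lrrGraphs n d).filter (fun N => FreshEvent J mf N), (optValue N k : ℝ))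
        + ∑ N ∈ (lrrGraphs n d).filter (fun N => ¬ FreshEvent J mf N), (optValue N k : ℝ) :=
    (Finset.sum_filter_add_sum_filter_not _ _ _).symm
  set Sg : ℝ := ∑ N ∈ (lrrGraphs n d).filter (fun N => FreshEvent J mf N), (optValue N k : ℝ)
    with hSg
  set Sb : ℝ := ∑ N ∈ (lrrGraphs n d).filter (fun N => ¬ FreshEvent J mf N), (optValue N k : ℝ)
    with hSb
  set Cg : ℝ := ∑ N ∈ (lrrGraphs n d).filter (fun N => FreshEvent J mf N),
      (((greedy N k).biUnion N).card : ℝ) with hCg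
  set Cb : ℝ := ∑ N ∈ (lrrGraphs n d).filter (fun N => ¬ FreshEvent J mf N),
      (((greedy N k).biUnion N).card : ℝ) with hCb
  have hCb0 : 0 ≤ Cb := by
    rw [hCb]
    apply Finset.sum_nonneg
    intro N _
    positivity
  have hSg0 : 0 ≤ Sg := by
    rw [hSg]
    apply Finset.sum_nonneg
    intro N _
    positivity
  have hSb0 : 0 ≤ Sb := by
    rw [hSb]
    apply Finset.sum_nonneg
    intro N _
    positivity
  have hSbB : Sb ≤ (n:ℝ) * B := by
    rw [hSb, hB]
    have hh := Finset.sum_le_card_nsmul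
      ((lrrGraphs n d).filter (fun N => ¬ FreshEvent J mf N))
      (fun N => (optValue N k : ℝ)) (n:ℝ)
      (fun N _ => by
        show (optValue N k : ℝ) ≤ (n:ℝ)
        exact_mod_cast optValue_le_R N k)
    rw [nsmul_eq_mul] at hh
    linarith only [hh]
  have hSg2 : 2 * (((lrrGraphs n d).filter (fun N => FreshEvent J mf N)).card : ℝ) ≤ Sg := by
    rw [hSg]
    have hh := Finset.card_nsmul_le_sum
      ((lrrGraphs n d).filter (fun N => FreshEvent J mf N))
      (fun N => (optValue N k : ℝ)) (2:ℝ)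
      (fun N hN => by
        show (2:ℝ) ≤ (optValue N k : ℝ)
        have hNΩ := Finset.mem_filter.mp hN
        have hNd : ∀ i, (N i).card = d := by
          have hmm := Finset.mem_filter.mp hNΩ.1
          exact hmm.2
        have hod : (d:ℝ) ≤ (optValue N k : ℝ) := by
          exact_mod_cast opt_ge_d (by omega) hk1 hNd
        linarith only [hod, hd2R])
    rw [nsmul_eq_mul] at hh
    linarith only [hh]
  have hcards : (((lrrGraphs n d).filter (fun N => FreshEvent J mf N)).card : ℝ) + B = W := by
    rw [hB, hW]
    have hh := Finset.card_filter_add_card_filter_not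
      (s := lrrGraphs n d) (p := fun N => FreshEvent J mf N)
    exact_mod_cast hh
  have h2B : 2*B ≤ W := by
    have hn400R : (400:ℝ) ≤ (n:ℝ) := by exact_mod_cast hn400
    have hB400 : 400*B ≤ (n:ℝ)*B := mul_le_mul_of_nonneg_right hn400R hB0
    have hcW : c*W ≤ W := by
      have hh : c*W ≤ 1*W := mul_le_mul_of_nonneg_right (by linarith only [hcsmall]) hW0.le
      linarith only [hh]
    nlinarith only [hB400, hBn, hcW, hB0]
  have h2cB : c*(2*B) ≤ c*W := mul_le_mul_of_nonneg_left h2B hc0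
  set Gc : ℝ := (((lrrGraphs n d).filter (fun N => FreshEvent J mf N)).card : ℝ) with hGc
  have hGc0 : 0 ≤ Gc := by rw [hGc]; positivity
  have hkey : (n:ℝ)*B ≤ 2*c*Gc := by
    have hGcW : Gc = W - B := by linarith only [hcards]
    rw [hGcW]
    have hr : 2*c*(W - B) = 2*(c*W) - c*(2*B) := by ring
    rw [hr]
    nlinarith only [hBn, h2cB]
  -- final chain
  have p1 : (1 - 1/Real.exp 1 + c)*Sb ≤ Sb := mul_le_of_le_one_left hSb0 hcoefle1
  have p2 : c*(2*Gc) ≤ c*Sg := mul_le_mul_of_nonneg_left hSg2 hc0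
  have hfin : (1 - 1/Real.exp 1 + c) * (Sg + Sb) ≤ Cg + Cb := by
    have hexpand : (1 - 1/Real.exp 1 + c) * (Sg + Sb)
        = (1 - 1/Real.exp 1 + c)*Sg + (1 - 1/Real.exp 1 + c)*Sb := by ring
    have hexpand2 : (1 - 1/Real.exp 1 + 2*c)*Sg
        = (1 - 1/Real.exp 1 + c)*Sg + c*Sg := by ring
    rw [hexpand]
    have hchain : (1 - 1/Real.exp 1 + c)*Sb ≤ c*Sg := by
      calc (1 - 1/Real.exp 1 + c)*Sb ≤ Sb := p1
        _ ≤ (n:ℝ)*B := hSbB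
        _ ≤ 2*c*Gc := hkey
        _ = c*(2*Gc) := by ring
        _ ≤ c*Sg := p2
    have hCgb : (1 - 1/Real.exp 1 + c)*Sg + c*Sg ≤ Cg := by
      rw [← hexpand2]
      exact hsumg
    linarith only [hchain, hCgb, hCb0]
  rw [hoptsplit, hcovsplit]
  exact hfin

end MainCase
section Final

lemma coef_le_one {ε : ℝ} (hε0 : 0 < ε) (hε1 : ε < 1) :
    1 - 1/Real.exp 1 + (ε/20)^24 ≤ 1 := by
  have he1 : (0:ℝ) < Real.exp 1 := Real.exp_pos 1
  have h13e : (1:ℝ)/3 ≤ 1/Real.exp 1 := by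
    rw [div_le_div_iff₀ (by norm_num) he1]
    linarith only [exp_one_le_three]
  have hc20 : (ε/20)^24 ≤ (1/20:ℝ)^24 := by
    apply pow_le_pow_left₀ (by positivity) _ 24
    rw [div_le_div_iff₀ (by norm_num) (by norm_num)]
    linarith only [hε1]
  have h240 : ((1/20:ℝ))^24 ≤ 1/3 := by norm_num
  linarith only [h13e, hc20, h240]

theorem greedy_critical_region_small_degrees' :
    ∃ n₀ : ℝ → ℕ,
      ∀ ε : ℝ, 0 < ε → ε < 1 →
        ∀ n d k : ℕ, n₀ ε ≤ n → (d : ℝ) ≤ 20 ^ 4 / ε ^ 8 →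
          ε * n / (2 * d) ≤ (k : ℝ) → (k : ℝ) ≤ 2 * n / (ε * d) →
          lrrExp n d (fun N => (((greedy N k).biUnion N).card : ℝ)) ≥
            (1 - 1 / Real.exp 1 + (ε / 20) ^ 24) *
              lrrExp n d (fun N => (optValue N k : ℝ)) := by
  classical
  refine ⟨fun ε => ⌈(20/ε)^17⌉₊ + 400, ?_⟩
  intro ε hε0 hε1 n d k hn hdD hklow hkup
  have hn' : ⌈(20/ε)^17⌉₊ + 400 ≤ n := hn
  have hn400 : 400 ≤ n := by omega
  have hn17 : (20/ε)^17 ≤ (n:ℝ) := by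
    have h1 : (20/ε)^17 ≤ (⌈(20/ε)^17⌉₊ : ℝ) := Nat.le_ceil _
    have h2 : (⌈(20/ε)^17⌉₊ : ℝ) ≤ (n:ℝ) := by
      exact_mod_cast (by omega : ⌈(20/ε)^17⌉₊ ≤ n)
    linarith only [h1, h2]
  have hn0 : (0:ℝ) < (n:ℝ) := by exact_mod_cast (by omega : 0 < n)
  have hcle1 := coef_le_one hε0 hε1
  have he1 : (0:ℝ) < Real.exp 1 := Real.exp_pos 1
  rcases Nat.lt_or_ge d 2 with hd | hd
  · interval_cases d
    · -- d = 0
      rw [lrrExp, lrrExp, ge_iff_le]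
      have hopt0 : ∀ N ∈ lrrGraphs n 0, ((optValue N k : ℕ):ℝ) = 0 := by
        intro N hN
        have hNd : ∀ i, (N i).card = 0 := by
          rw [lrrGraphs, Finset.mem_filter] at hN
          exact hN.2
        have hle := optValue_le_mul N hNd (k := k)
        rw [Nat.mul_zero] at hle
        have : optValue N k = 0 := Nat.le_zero.mp hle
        rw [this]
        norm_num
      have hz : ∑ N ∈ lrrGraphs n 0, ((optValue N k : ℕ):ℝ) = 0 :=
        Finset.sum_eq_zero hopt0
      rw [hz]
      rw [zero_div, mul_zero]
      apply div_nonneg _ (Nat.cast_nonneg _)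
      apply Finset.sum_nonneg
      intro N _
      positivity
    · -- d = 1
      rw [lrrExp, lrrExp, ge_iff_le]
      have hW0 : (0:ℝ) < ((lrrGraphs n 1).card : ℝ) := by
        exact_mod_cast lrr_card_pos (by omega : 1 ≤ n)
      have hpt : ∀ N ∈ lrrGraphs n 1,
          ((optValue N k : ℕ):ℝ) ≤ (((greedy N k).biUnion N).card : ℝ) := by
        intro N hN
        have hNd : ∀ i, (N i).card = 1 := by
          rw [lrrGraphs, Finset.mem_filter] at hN
          exact hN.2
        exact_mod_cast d1_bound hNd
      have hsum : ∑ N ∈ lrrGraphs n 1, ((optValue N k : ℕ):ℝ)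
          ≤ ∑ N ∈ lrrGraphs n 1, (((greedy N k).biUnion N).card : ℝ) :=
        Finset.sum_le_sum hpt
      have hopt0 : 0 ≤ ∑ N ∈ lrrGraphs n 1, ((optValue N k : ℕ):ℝ) := by
        apply Finset.sum_nonneg
        intro N _
        positivity
      have h1 : (1 - 1/Real.exp 1 + (ε/20)^24)
            * ((∑ N ∈ lrrGraphs n 1, ((optValue N k : ℕ):ℝ)) / ((lrrGraphs n 1).card : ℝ))
          ≤ (∑ N ∈ lrrGraphs n 1, ((optValue N k : ℕ):ℝ)) / ((lrrGraphs n 1).card : ℝ) :=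
        mul_le_of_le_one_left (div_nonneg hopt0 hW0.le) hcle1
      have h2 : (∑ N ∈ lrrGraphs n 1, ((optValue N k : ℕ):ℝ)) / ((lrrGraphs n 1).card : ℝ)
          ≤ (∑ N ∈ lrrGraphs n 1, (((greedy N k).biUnion N).card : ℝ))
            / ((lrrGraphs n 1).card : ℝ) :=
        (div_le_div_iff_of_pos_right hW0).mpr hsum
      linarith only [h1, h2]
  · -- d ≥ 2
    have hd0 : (0:ℝ) < (d:ℝ) := by exact_mod_cast (by omega : 0 < d)
    have hk1 : 1 ≤ k := by
      by_contra hk0'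
      have hk0 : k = 0 := by omega
      rw [hk0] at hklow
      have hpos : (0:ℝ) < ε * n / (2*(d:ℝ)) := by
        apply div_pos (by positivity)
        linarith only [hd0]
      norm_num at hklow
      linarith only [hpos, hklow]
    have hmain := sum_bound_d2 hε0 hε1 hd hk1 hn400 hdD hkup hn17
    have hdn : d ≤ n := by
      have h1 : (20:ℝ)^4/ε^8 ≤ (20:ℝ)^17/ε^17 :=
        div_le_div₀ (by positivity) (by norm_num) (by positivity)
          (pow_le_pow_of_le_one hε0.le hε1.le (by norm_num))
      have h2 : ((20:ℝ)/ε)^17 = (20:ℝ)^17/ε^17 := div_pow 20 ε 17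
      have : (d:ℝ) ≤ (n:ℝ) := by linarith only [hdD, h1, hn17, h2.ge, h2.le]
      exact_mod_cast this
    have hW0 : (0:ℝ) < ((lrrGraphs n d).card : ℝ) := by
      exact_mod_cast lrr_card_pos hdn
    rw [lrrExp, lrrExp, ge_iff_le, ← mul_div_assoc]
    exact (div_le_div_iff_of_pos_right hW0).mpr hmain

end Final

/-- **Lemma 3.6 (critical region, small degrees).** There is a threshold
function `n₀` such that for every `ε ∈ (0,1)`, every `n ≥ n₀(ε)`, every
`d ≤ 20⁴/ε⁸` and every `k ∈ [εn/(2d), 2n/(εd)]`, greedy achieves, in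
expectation, a `(1 - 1/e + (ε/20)²⁴)`-approximation under `LRR(n, d)`. -/
theorem greedy_critical_region_small_degrees :
    ∃ n₀ : ℝ → ℕ,
      ∀ ε : ℝ, 0 < ε → ε < 1 →
        ∀ n d k : ℕ, n₀ ε ≤ n → (d : ℝ) ≤ 20 ^ 4 / ε ^ 8 →
          ε * n / (2 * d) ≤ (k : ℝ) → (k : ℝ) ≤ 2 * n / (ε * d) →
          lrrExp n d (fun N => (((greedy N k).biUnion N).card : ℝ)) ≥
            (1 - 1 / Real.exp 1 + (ε / 20) ^ 24) *
              lrrExp n d (fun N => (optValue N k : ℝ)) := greedy_critical_region_small_degrees'
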